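/- Every symmetric matrix S over F₂ admits a decomposition S = L Lᵀ, where L is a binary matrix with at most rank(S) + 1 columns; moreover if S has a nonzero diagonal entry then L can be taken with exactly rank(S) columns. -/

import Mathlib

open Matrix

namespace Lempel

abbrev F2 := ZMod 2

lemma F2.mul_self (x : F2) : x * x = x := by revert x; decide

lemma F2.add_self (x : F2) : x + x = 0 := by revert x; decide

lemma F2.eq_one_of_ne_zero {x : F2} (h : x ≠ 0) : x = 1 := by revert x; decide

/-- append a column -/
def ext1 {n a : ℕ} (L : Matrix (Fin n) (Fin a) F2) (v : Fin n → F2) :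
    Matrix (Fin n) (Fin (a+1)) F2 := Matrix.of fun i => Fin.snoc (L i) (v i)

lemma ext1_mul_transpose {n a : ℕ} (L : Matrix (Fin n) (Fin a) F2) (v : Fin n → F2) :
    (ext1 L v) * (ext1 L v)ᵀ = L * Lᵀ + vecMulVec v v := by
  ext i j
  simp [ext1, Matrix.mul_apply, Fin.sum_univ_castSucc, vecMulVec, Matrix.add_apply,
    transpose_apply]

lemma ext1_mulVec {n a : ℕ} (L : Matrix (Fin n) (Fin a) F2) (v : Fin n → F2)
    (c : Fin a → F2) (x : F2) :
    (ext1 L v) *ᵥ (Fin.snoc c x) = L *ᵥ c + x • v := by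
  ext i
  simp [ext1, Matrix.mulVec, dotProduct, Fin.sum_univ_castSucc, mul_comm]



lemma vecMulVec_mulVec {n m : ℕ} (u : Fin n → F2) (v x : Fin m → F2) :
    (vecMulVec u v) *ᵥ x = (v ⬝ᵥ x) • u := by
  ext i
  simp only [vecMulVec_apply, Matrix.mulVec, dotProduct, Pi.smul_apply, smul_eq_mul, Finset.sum_mul, Finset.mul_sum]
  exact Finset.sum_congr rfl fun k _ => by ring

lemma finrank_sup_span {n : ℕ} (p : Submodule F2 (Fin n → F2)) (v : Fin n → F2)
    (hv : v ∉ p) :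
    Module.finrank F2 ((p ⊔ (Submodule.span F2 {v}) : Submodule F2 (Fin n → F2)) : Submodule F2 (Fin n → F2)) = Module.finrank F2 p + 1 := by
  have hv0 : v ≠ 0 := fun h => hv (h ▸ p.zero_mem)
  have hinf : p ⊓ Submodule.span F2 {v} = ⊥ := by
    rw [Submodule.eq_bot_iff]
    rintro x ⟨hxp, hxs⟩
    rcases Submodule.mem_span_singleton.mp hxs with ⟨c, rfl⟩
    rcases (by decide : ∀ c : F2, c = 0 ∨ c = 1) c with rfl | rfl
    · simp
    · simp only [one_smul] at hxp ⊢; exact absurd hxp hv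
  have := Submodule.finrank_sup_add_finrank_inf_eq p (Submodule.span F2 {v})
  rw [hinf, finrank_bot, finrank_span_singleton hv0] at this
  omega
end Lempel
namespace Lempel
open Submodule

lemma matrix_add_add_self {n m : ℕ} (A B : Matrix (Fin n) (Fin m) F2) : A + B + B = A := by
  ext i j; simp [Matrix.add_apply, add_assoc, F2.add_self]

lemma rank_step_diag {n : ℕ} (S : Matrix (Fin n) (Fin n) F2) (hS : S.IsSymm)
    (i : Fin n) (hi : S i i = 1) :
    S.rank = (S + vecMulVec (fun k => S k i) (fun k => S k i)).rank + 1 := by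
  set v : Fin n → F2 := fun k => S k i with hv
  set S₁ := S + vecMulVec v v with hS₁
  have hsymm : ∀ a b, S a b = S b a := fun a b => hS.apply b a
  have hrow : ∀ k, S₁ i k = 0 := by
    intro k
    simp only [hS₁, Matrix.add_apply, vecMulVec_apply, hv, hi, one_mul]
    rw [hsymm k i, F2.add_self]
  have hvmem : v ∈ LinearMap.range S.mulVecLin := by
    refine ⟨Pi.single i 1, ?_⟩
    ext k
    simp [Matrix.mulVecLin_apply, Matrix.mulVec_single]
    rfl
  have hSx : ∀ x, S *ᵥ x = S₁ *ᵥ x + (v ⬝ᵥ x) • v := by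
    intro x
    rw [hS₁, Matrix.add_mulVec, vecMulVec_mulVec]
    ext k
    simp [add_assoc, F2.add_self]
  have hS₁x : ∀ x, S₁ *ᵥ x = S *ᵥ x + (v ⬝ᵥ x) • v := by
    intro x
    rw [hSx x]; ext k; simp [add_assoc, F2.add_self]
  have hvnot : v ∉ LinearMap.range S₁.mulVecLin := by
    rintro ⟨x, hx⟩
    have : (S₁ *ᵥ x) i = 0 := by
      simp only [Matrix.mulVec, dotProduct]
      exact Finset.sum_eq_zero fun k _ => by rw [hrow k, zero_mul]
    rw [show S₁.mulVecLin x = S₁ *ᵥ x from rfl] at hx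
    rw [hx] at this
    simp only [hv, hi] at this
    exact one_ne_zero this
  have hrange : LinearMap.range S.mulVecLin
      = LinearMap.range S₁.mulVecLin ⊔ span F2 {v} := by
    apply le_antisymm
    · rintro _ ⟨x, rfl⟩
      rw [show S.mulVecLin x = S *ᵥ x from rfl, hSx x]
      exact add_mem (mem_sup_left ⟨x, rfl⟩)
        (mem_sup_right (smul_mem _ _ (mem_span_singleton_self v)))
    · rw [sup_le_iff]
      constructor
      · rintro _ ⟨x, rfl⟩
        rw [show S₁.mulVecLin x = S₁ *ᵥ x from rfl, hS₁x x]
        exact add_mem ⟨x, rfl⟩ (smul_mem _ _ hvmem)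
      · rw [span_le, Set.singleton_subset_iff]; exact hvmem
  rw [Matrix.rank, Matrix.rank, hrange, finrank_sup_span _ _ hvnot]


lemma rank_step_alt {n : ℕ} (S : Matrix (Fin n) (Fin n) F2) (hS : S.IsSymm)
    (hdiag : ∀ k, S k k = 0) (i j : Fin n) (hij : S i j = 1) :
    S.rank = (S + vecMulVec (fun k => S k i) (fun k => S k j)
      + vecMulVec (fun k => S k j) (fun k => S k i)).rank + 2 := by
  set u : Fin n → F2 := fun k => S k i with hu
  set v : Fin n → F2 := fun k => S k j with hvdef
  set S₁ := S + vecMulVec u v + vecMulVec v u with hS₁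
  have hsymm : ∀ a b, S a b = S b a := fun a b => hS.apply b a
  have hui : u i = 0 := hdiag i
  have huj : u j = 1 := (hsymm j i).trans hij
  have hvi : v i = 1 := hij
  have hvj : v j = 0 := hdiag j
  have hrowi : ∀ k, S₁ i k = 0 := by
    intro k
    show S i k + u i * v k + v i * u k = 0
    rw [hui, hvi, zero_mul, one_mul, add_zero]
    rw [show u k = S i k from hsymm k i, F2.add_self]
  have hrowj : ∀ k, S₁ j k = 0 := by
    intro k
    show S j k + u j * v k + v j * u k = 0
    rw [huj, hvj, one_mul, zero_mul, add_zero]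
    rw [show v k = S j k from hsymm k j, F2.add_self]
  have humem : u ∈ LinearMap.range S.mulVecLin := by
    refine ⟨Pi.single i 1, ?_⟩; ext k
    simp [Matrix.mulVecLin_apply, Matrix.mulVec_single]
    rfl
  have hvmem : v ∈ LinearMap.range S.mulVecLin := by
    refine ⟨Pi.single j 1, ?_⟩; ext k
    simp [Matrix.mulVecLin_apply, Matrix.mulVec_single]
    rfl
  have hSx : ∀ x, S *ᵥ x = S₁ *ᵥ x + (v ⬝ᵥ x) • u + (u ⬝ᵥ x) • v := by
    intro x
    rw [hS₁, Matrix.add_mulVec, Matrix.add_mulVec, vecMulVec_mulVec, vecMulVec_mulVec]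
    ext k
    simp only [Pi.add_apply, Pi.smul_apply, smul_eq_mul]
    ring_nf
    simp [show (2:F2) = 0 from by decide]
  have hS₁x : ∀ x, S₁ *ᵥ x = S *ᵥ x + (v ⬝ᵥ x) • u + (u ⬝ᵥ x) • v := by
    intro x
    rw [hSx x]; ext k
    simp only [Pi.add_apply, Pi.smul_apply, smul_eq_mul]
    ring_nf
    simp [show (2:F2) = 0 from by decide]
  have coord_zero : ∀ (k : Fin n), (∀ m, S₁ k m = 0) → ∀ x, (S₁ *ᵥ x) k = 0 := by
    intro k hk x
    simp only [Matrix.mulVec, dotProduct]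
    exact Finset.sum_eq_zero fun m _ => by rw [hk m, zero_mul]
  have hvnot : v ∉ LinearMap.range S₁.mulVecLin := by
    rintro ⟨x, hx⟩
    have h0 : (S₁ *ᵥ x) i = 0 := coord_zero i hrowi x
    rw [show S₁.mulVecLin x = S₁ *ᵥ x from rfl] at hx
    rw [hx, hvi] at h0
    exact one_ne_zero h0
  have hunot : u ∉ (LinearMap.range S₁.mulVecLin ⊔ Submodule.span F2 {v}) := by
    intro hmem
    rcases Submodule.mem_sup.mp hmem with ⟨y, ⟨x, rfl⟩, z, hz, hsum⟩
    rcases Submodule.mem_span_singleton.mp hz with ⟨c, rfl⟩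
    have := congrFun hsum j
    rw [show S₁.mulVecLin x = S₁ *ᵥ x from rfl] at this
    simp only [Pi.add_apply, Pi.smul_apply, smul_eq_mul] at this
    rw [coord_zero j hrowj x, hvj, mul_zero, add_zero, huj] at this
    exact one_ne_zero this.symm
  have hrange : LinearMap.range S.mulVecLin
      = (LinearMap.range S₁.mulVecLin ⊔ Submodule.span F2 {v}) ⊔ Submodule.span F2 {u} := by
    apply le_antisymm
    · rintro _ ⟨x, rfl⟩
      rw [show S.mulVecLin x = S *ᵥ x from rfl, hSx x]
      refine add_mem (add_mem ?_ ?_) ?_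
      · exact Submodule.mem_sup_left (Submodule.mem_sup_left ⟨x, rfl⟩)
      · exact Submodule.mem_sup_right
          (Submodule.smul_mem _ _ (Submodule.mem_span_singleton_self u))
      · exact Submodule.mem_sup_left (Submodule.mem_sup_right
          (Submodule.smul_mem _ _ (Submodule.mem_span_singleton_self v)))
    · rw [sup_le_iff, sup_le_iff]
      refine ⟨⟨?_, ?_⟩, ?_⟩
      · rintro _ ⟨x, rfl⟩
        rw [show S₁.mulVecLin x = S₁ *ᵥ x from rfl, hS₁x x]
        exact add_mem (add_mem ⟨x, rfl⟩ (Submodule.smul_mem _ _ humem))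
          (Submodule.smul_mem _ _ hvmem)
      · rw [Submodule.span_le, Set.singleton_subset_iff]; exact hvmem
      · rw [Submodule.span_le, Set.singleton_subset_iff]; exact humem
  rw [Matrix.rank, Matrix.rank, hrange, finrank_sup_span _ _ hunot,
    finrank_sup_span _ _ hvnot]

lemma dot_snoc {a : ℕ} (c d : Fin a → F2) (x y : F2) :
    (Fin.snoc c x : Fin (a+1) → F2) ⬝ᵥ (Fin.snoc d y) = c ⬝ᵥ d + x * y := by
  simp [dotProduct, Fin.sum_univ_castSucc]

lemma mod_col {n a : ℕ} (A : Matrix (Fin n) (Fin a) F2) (u : Fin n → F2) (c : Fin a → F2)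
    (hc : A *ᵥ c = 0) (hcc : c ⬝ᵥ c = 1) :
    (A + vecMulVec u c) * (A + vecMulVec u c)ᵀ = A * Aᵀ + vecMulVec u u := by
  ext i j
  have h1 : ∀ k, (A i k + u i * c k) * (A j k + u j * c k)
      = A i k * A j k + u j * (A i k * c k) + u i * (A j k * c k)
        + u i * u j * (c k * c k) := fun k => by ring
  simp only [Matrix.mul_apply, Matrix.add_apply, vecMulVec_apply, Matrix.transpose_apply]
  rw [Finset.sum_congr rfl fun k _ => h1 k]
  rw [Finset.sum_add_distrib, Finset.sum_add_distrib, Finset.sum_add_distrib,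
    ← Finset.mul_sum, ← Finset.mul_sum, ← Finset.mul_sum]
  have h2 : ∑ k, A i k * c k = 0 := congrFun hc i
  have h3 : ∑ k, A j k * c k = 0 := congrFun hc j
  have h4 : ∑ k, c k * c k = 1 := hcc
  rw [h2, h3, h4, mul_zero, mul_zero, mul_one, add_zero, add_zero]

lemma alt_decomp {n : ℕ} : ∀ r : ℕ, ∀ S : Matrix (Fin n) (Fin n) F2, S.IsSymm →
    (∀ k, S k k = 0) → S.rank = r →
    ∃ L : Matrix (Fin n) (Fin (r+1)) F2, S = L * Lᵀ ∧
      ∃ c : Fin (r+1) → F2, L *ᵥ c = 0 ∧ c ⬝ᵥ c = 1 := by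
  intro r
  induction r using Nat.strong_induction_on with
  | _ r IH =>
    intro S hS hdiag hr
    by_cases hS0 : S = 0
    · subst hS0
      rw [Matrix.rank_zero] at hr
      subst hr
      refine ⟨0, by simp, fun _ => 1, by simp, by simp [dotProduct]⟩
    · have : ∃ i j, S i j ≠ 0 := by
        by_contra h
        push_neg at h
        exact hS0 (by ext i j; simpa using h i j)
      obtain ⟨i, j, hij0⟩ := this
      have hij : S i j = 1 := F2.eq_one_of_ne_zero hij0
      set u : Fin n → F2 := fun k => S k i with hu
      set v : Fin n → F2 := fun k => S k j with hv
      set S₁ := S + vecMulVec u v + vecMulVec v u with hS₁def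
      have hsymm : ∀ a b, S a b = S b a := fun a b => hS.apply b a
      have hrank : S.rank = S₁.rank + 2 := rank_step_alt S hS hdiag i j hij
      have hS₁symm : S₁.IsSymm := by
        apply Matrix.IsSymm.ext
        intro a b
        show S b a + u b * v a + v b * u a = S a b + u a * v b + v a * u b
        rw [hsymm b a]; ring
      have hS₁diag : ∀ k, S₁ k k = 0 := by
        intro k
        show S k k + u k * v k + v k * u k = 0
        rw [hdiag k]; ring_nf
        simp [show (2:F2) = 0 from by decide]
      have hlt : S₁.rank < r := by omega
      obtain ⟨L₁, hL₁, c₁, hc₁, hcc₁⟩ := IH S₁.rank hlt S₁ hS₁symm hS₁diag rfl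
      have hrr : r = S₁.rank + 2 := by omega
      subst hrr
      set A := L₁ + vecMulVec u c₁ with hA
      refine ⟨ext1 (ext1 A (u + v)) v, ?_, Fin.snoc (Fin.snoc c₁ 1) 1, ?_, ?_⟩
      · rw [ext1_mul_transpose, ext1_mul_transpose, hA, mod_col L₁ u c₁ hc₁ hcc₁, ← hL₁]
        ext a b
        show S a b =
          (S a b + u a * v b + v a * u b) + u a * u b + (u a + v a) * (u b + v b) + v a * v b
        ring_nf
        simp [show (2:F2) = 0 from by decide]
      · rw [show (Fin.snoc (Fin.snoc c₁ 1) 1 : Fin (S₁.rank + 1 + 1 + 1) → F2)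
            = Fin.snoc (Fin.snoc c₁ 1) 1 from rfl]
        rw [ext1_mulVec, ext1_mulVec, hA, Matrix.add_mulVec, hc₁, vecMulVec_mulVec, hcc₁]
        ext k
        simp only [Pi.add_apply, Pi.smul_apply, smul_eq_mul, Pi.zero_apply, one_mul, zero_add,
          one_smul]
        ring_nf
        simp [show (2:F2) = 0 from by decide]
      · rw [dot_snoc, dot_snoc, hcc₁]
        decide

lemma diag_decomp {n : ℕ} : ∀ r : ℕ, ∀ S : Matrix (Fin n) (Fin n) F2, S.IsSymm →
    (∃ i, S i i ≠ 0) → S.rank = r →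
    ∃ L : Matrix (Fin n) (Fin r) F2, S = L * Lᵀ := by
  intro r
  induction r using Nat.strong_induction_on with
  | _ r IH =>
    intro S hS ⟨i, hi0⟩ hr
    have hi : S i i = 1 := F2.eq_one_of_ne_zero hi0
    set v : Fin n → F2 := fun k => S k i with hv
    set S₁ := S + vecMulVec v v with hS₁def
    have hsymm : ∀ a b, S a b = S b a := fun a b => hS.apply b a
    have hrank : S.rank = S₁.rank + 1 := rank_step_diag S hS i hi
    have hS₁symm : S₁.IsSymm := by
      apply Matrix.IsSymm.ext
      intro a b
      show S b a + v b * v a = S a b + v a * v b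
      rw [hsymm b a]; ring
    have hSrec : S = S₁ + vecMulVec v v := (matrix_add_add_self S (vecMulVec v v)).symm
    have hrr : r = S₁.rank + 1 := by omega
    subst hrr
    by_cases hd : ∃ k, S₁ k k ≠ 0
    · obtain ⟨M, hM⟩ := IH S₁.rank (by omega) S₁ hS₁symm hd rfl
      refine ⟨ext1 M v, ?_⟩
      rw [ext1_mul_transpose, ← hM, ← hSrec]
    · push_neg at hd
      obtain ⟨L₁, hL₁, c, hc, hcc⟩ := alt_decomp S₁.rank S₁ hS₁symm hd rfl
      refine ⟨L₁ + vecMulVec v c, ?_⟩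
      rw [mod_col L₁ v c hc hcc, ← hL₁, ← hSrec]

end Lempel

open Lempel in
/-- Binary Cholesky decomposition (Lempel 1975): every symmetric matrix `S` over `𝔽₂`
equals `L Lᵀ` with `L` having at most `rank S + 1` columns, and exactly `rank S` columns
if `S` has a nonzero diagonal entry. -/
theorem stmt_18 (n : ℕ) (S : Matrix (Fin n) (Fin n) (ZMod 2)) (hS : S.IsSymm) :
    (∃ a : ℕ, a ≤ S.rank + 1 ∧
      ∃ L : Matrix (Fin n) (Fin a) (ZMod 2), S = L * Lᵀ) ∧
    ((∃ i, S i i ≠ 0) →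
      ∃ L : Matrix (Fin n) (Fin S.rank) (ZMod 2), S = L * Lᵀ) := by
  constructor
  · by_cases h : ∃ i, S i i ≠ 0
    · obtain ⟨L, hL⟩ := diag_decomp S.rank S hS h rfl
      exact ⟨S.rank, by omega, L, hL⟩
    · push_neg at h
      obtain ⟨L, hL, -⟩ := alt_decomp S.rank S hS h rfl
      exact ⟨S.rank + 1, le_rfl, L, hL⟩
  · intro h
    obtain ⟨L, hL⟩ := diag_decomp S.rank S hS h rfl
    exact ⟨L, hL⟩
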